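/- Let d ≥ 1 and 1 ≤ k ≤ d be integers, let x ∈ ℝ^d, and let S ⊆ {1,…,d} be a top-k coordinate set for x. Then the top-k error is at most the average rand_k error: ‖mask_S(x) − x‖² ≤ (1 / C(d,k)) · Σ_{ω ⊆ {1,…,d}, |ω| = k} ‖mask_ω(x) − x‖², where the sum ranges over all k-element subsets ω of {1,…,d} and ‖·‖ is the Euclidean norm. -/

import Mathlib

/-- The masked vector `mask ω x` has `j`-th coordinate `x j` if `j ∈ ω` and `0` otherwise. -/
def mask {d : ℕ} (ω : Finset (Fin d)) (x : EuclideanSpace ℝ (Fin d)) :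
    EuclideanSpace ℝ (Fin d) :=
  WithLp.toLp 2 (fun j => if j ∈ ω then x j else 0)

lemma mask_err_sq {d : ℕ} (ω : Finset (Fin d)) (x : EuclideanSpace ℝ (Fin d)) :
    ‖mask ω x - x‖ ^ 2 = ∑ j ∈ ωᶜ, (x j) ^ 2 := by
  have h : ‖mask ω x - x‖ = Real.sqrt (∑ j, ‖(mask ω x - x) j‖ ^ 2) :=
    EuclideanSpace.norm_eq _
  rw [h, Real.sq_sqrt (by positivity)]
  rw [← Finset.sum_compl_add_sum ω (fun j => ‖(mask ω x - x) j‖ ^ 2)]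
  have h1 : ∀ j ∈ ωᶜ, ‖(mask ω x - x) j‖ ^ 2 = (x j) ^ 2 := by
    intro j hj
    simp only [Finset.mem_compl] at hj
    simp [mask, hj, sub_eq_add_neg]
  have h2 : ∀ j ∈ ω, ‖(mask ω x - x) j‖ ^ 2 = 0 := by
    intro j hj
    simp [mask, hj]
  rw [Finset.sum_congr rfl h1, Finset.sum_congr rfl h2]
  simp

/-- For a top-`k` coordinate set `S` of `x`, the top-`k` error is at most the average
rand-`k` error: `‖mask_S(x) − x‖² ≤ (1 / C(d,k)) · Σ_{|ω| = k} ‖mask_ω(x) − x‖²`. -/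
theorem topk_error_le_randk_error (d k : ℕ) (hd : 1 ≤ d) (hk1 : 1 ≤ k) (hkd : k ≤ d)
    (x : EuclideanSpace ℝ (Fin d)) (S : Finset (Fin d)) (hS : S.card = k)
    (htop : ∀ i ∈ S, ∀ j ∉ S, |x j| ≤ |x i|) :
    ‖mask S x - x‖ ^ 2 ≤
      ((d.choose k : ℝ))⁻¹ *
        ∑ ω ∈ Finset.powersetCard k (Finset.univ : Finset (Fin d)),
          ‖mask ω x - x‖ ^ 2 := by
  have key : ∀ ω ∈ Finset.powersetCard k (Finset.univ : Finset (Fin d)),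
      ‖mask S x - x‖ ^ 2 ≤ ‖mask ω x - x‖ ^ 2 := by
    intro ω hω
    rw [Finset.mem_powersetCard] at hω
    rw [mask_err_sq, mask_err_sq]
    have hcard : (ω \ S).card = (S \ ω).card :=
      Finset.card_sdiff_comm (hω.2.trans hS.symm)
    have hS' : ∑ j ∈ Sᶜ, (x j) ^ 2
        = ∑ j ∈ Sᶜ ∩ ωᶜ, (x j) ^ 2 + ∑ j ∈ ω \ S, (x j) ^ 2 := by
      rw [← Finset.sum_inter_add_sum_sdiff Sᶜ ωᶜ (fun j => (x j)^2)]
      have : Sᶜ \ ωᶜ = ω \ S := by ext j; simp [and_comm]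
      rw [this]
    have hω' : ∑ j ∈ ωᶜ, (x j) ^ 2
        = ∑ j ∈ Sᶜ ∩ ωᶜ, (x j) ^ 2 + ∑ j ∈ S \ ω, (x j) ^ 2 := by
      rw [Finset.inter_comm, ← Finset.sum_inter_add_sum_sdiff ωᶜ Sᶜ (fun j => (x j)^2)]
      have : ωᶜ \ Sᶜ = S \ ω := by ext j; simp [and_comm]
      rw [this]
    rw [hS', hω']
    gcongr _ + ?_
    -- ∑_{ω \ S} x² ≤ ∑_{S \ ω} x²
    rcases Finset.eq_empty_or_nonempty (S \ ω) with he | hne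
    · have : ω \ S = ∅ := Finset.card_eq_zero.mp (by rw [hcard, he]; simp)
      simp [this, he]
    · obtain ⟨i₀, hi₀, hmin⟩ := Finset.exists_min_image (S \ ω) (fun i => (x i)^2) hne
      have hi₀S : i₀ ∈ S := (Finset.mem_sdiff.mp hi₀).1
      calc ∑ j ∈ ω \ S, (x j) ^ 2 ≤ (ω \ S).card • (x i₀) ^ 2 := by
            apply Finset.sum_le_card_nsmul
            intro j hj
            have hjS : j ∉ S := (Finset.mem_sdiff.mp hj).2
            have := htop i₀ hi₀S j hjS
            calc (x j)^2 = |x j|^2 := by rw [sq_abs]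
              _ ≤ |x i₀|^2 := by gcongr
              _ = (x i₀)^2 := sq_abs _
        _ = (S \ ω).card • (x i₀) ^ 2 := by rw [hcard]
        _ ≤ ∑ j ∈ S \ ω, (x j) ^ 2 := Finset.card_nsmul_le_sum _ _ _ hmin
  have hcount : (Finset.powersetCard k (Finset.univ : Finset (Fin d))).card = d.choose k := by
    simp [Finset.card_powersetCard]
  have hsum := Finset.card_nsmul_le_sum
      (Finset.powersetCard k (Finset.univ : Finset (Fin d)))
      (fun ω => ‖mask ω x - x‖ ^ 2) (‖mask S x - x‖ ^ 2) key
  rw [hcount] at hsum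
  have hpos : (0 : ℝ) < (d.choose k : ℝ) := by
    exact_mod_cast Nat.choose_pos hkd
  rw [nsmul_eq_mul] at hsum
  calc ‖mask S x - x‖ ^ 2
      ≤ (∑ ω ∈ Finset.powersetCard k (Finset.univ : Finset (Fin d)),
          ‖mask ω x - x‖ ^ 2) / (d.choose k : ℝ) := (le_div_iff₀' hpos).mpr hsum
    _ = _ := by rw [div_eq_inv_mul]
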